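/- If G is a 1-homogeneous graph with degree k and least adjacency eigenvalue τ, then χ_vec(G) = θ̄(G) = 1 − k/τ. In particular the vector chromatic number and the Lovász theta of the complement coincide for 1-homogeneous graphs. -/

import Mathlib

section Helpers

open Polynomial Matrix

set_option linter.unusedSectionVars false

variable {V : Type} [Fintype V] [DecidableEq V]

lemma myAevalConj (u D : Matrix V V ℝ) (h1 : star u * u = 1) (h2 : u * star u = 1)
    (p : ℝ[X]) : aeval (u * D * star u) p = u * (aeval D p) * star u := by
  have hpow : ∀ m : ℕ, (u * D * star u) ^ m = u * D ^ m * star u := by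
    intro m
    induction m with
    | zero => simp [h2]
    | succ n ih =>
        rw [pow_succ, pow_succ, ih]
        have e1 : u * D ^ n * star u * (u * D * star u)
            = u * D ^ n * (star u * u) * (D * star u) := by simp only [mul_assoc]
        rw [e1, h1, mul_one]
        simp only [mul_assoc]
  induction p using Polynomial.induction_on' with
  | add p q hp hq => simp [map_add, hp, hq, mul_add, add_mul]
  | monomial m a =>
      rw [aeval_monomial, aeval_monomial, hpow, ← Algebra.smul_def, ← Algebra.smul_def]
      simp [Matrix.smul_mul, Matrix.mul_smul]

lemma myAevalDiagonal (d : V → ℝ) (p : ℝ[X]) :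
    aeval (Matrix.diagonal d) p = Matrix.diagonal (fun i => p.eval (d i)) := by
  induction p using Polynomial.induction_on' with
  | add p q hp hq => simp [map_add, hp, hq, diagonal_add]
  | monomial m a =>
      rw [aeval_monomial, ← Algebra.smul_def, Matrix.diagonal_pow]
      ext i j
      rcases eq_or_ne i j with rfl | h
      · simp [Matrix.diagonal_apply_eq, eval_monomial]
      · simp [Matrix.diagonal_apply_ne _ h]

lemma myAevalVanish {A : Matrix V V ℝ} (hA : A.IsHermitian) (p : ℝ[X])
    (h : ∀ i, p.eval (hA.eigenvalues i) = 0) : aeval A p = 0 := by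
  have h1 : star (hA.eigenvectorUnitary : Matrix V V ℝ) * hA.eigenvectorUnitary = 1 :=
    Matrix.mem_unitaryGroup_iff'.mp hA.eigenvectorUnitary.2
  have h2 : (hA.eigenvectorUnitary : Matrix V V ℝ) * star (hA.eigenvectorUnitary : Matrix V V ℝ) = 1 :=
    Matrix.mem_unitaryGroup_iff.mp hA.eigenvectorUnitary.2
  have hST := hA.spectral_theorem
  rw [RCLike.ofReal_real_eq_id] at hST
  rw [Unitary.conjStarAlgAut_apply] at hST
  conv_lhs => rw [hST]
  rw [myAevalConj _ _ h1 h2, myAevalDiagonal]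
  have : (fun i => p.eval (hA.eigenvalues i)) = fun _ => (0:ℝ) := funext h
  simp only [Function.comp_def, id_eq]
  rw [this]
  simp

lemma myShiftPSD {A : Matrix V V ℝ} (hA : A.IsHermitian) (τ : ℝ)
    (h : ∀ i, τ ≤ hA.eigenvalues i) : (A - τ • 1).PosSemidef := by
  have h2 : (hA.eigenvectorUnitary : Matrix V V ℝ) * star (hA.eigenvectorUnitary : Matrix V V ℝ) = 1 :=
    Matrix.mem_unitaryGroup_iff.mp hA.eigenvectorUnitary.2
  have hST := hA.spectral_theorem
  rw [RCLike.ofReal_real_eq_id] at hST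
  rw [Unitary.conjStarAlgAut_apply] at hST
  have key : A - τ • 1 = (hA.eigenvectorUnitary : Matrix V V ℝ) *
      Matrix.diagonal (fun i => hA.eigenvalues i - τ) *
      star (hA.eigenvectorUnitary : Matrix V V ℝ) := by
    have : (τ • (1 : Matrix V V ℝ)) = (hA.eigenvectorUnitary : Matrix V V ℝ) *
        Matrix.diagonal (fun _ => τ) * star (hA.eigenvectorUnitary : Matrix V V ℝ) := by
      rw [← Matrix.smul_one_eq_diagonal]
      rw [Matrix.mul_smul, mul_one, Matrix.smul_mul, h2]
    conv_lhs => rw [hST, this]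
    rw [← Matrix.sub_mul, ← Matrix.mul_sub, Matrix.diagonal_sub]
    rfl
  rw [key]
  have hd : Matrix.PosSemidef (Matrix.diagonal (fun i => hA.eigenvalues i - τ)) :=
    Matrix.PosSemidef.diagonal (fun i => by simpa using sub_nonneg.mpr (h i))
  simpa [Matrix.star_eq_conjTranspose] using
    hd.mul_mul_conjTranspose_same (hA.eigenvectorUnitary : Matrix V V ℝ)

lemma myPSDdiag {M : Matrix V V ℝ} (hM : M.PosSemidef) (i : V) : 0 ≤ M i i := by
  have := hM.dotProduct_mulVec_nonneg (Pi.single i 1)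
  simpa [single_dotProduct, Matrix.mulVec_single] using this

open scoped MatrixOrder in
lemma myTraceMulNonneg {P Q : Matrix V V ℝ} (hP : P.PosSemidef) (hQ : Q.PosSemidef) :
    0 ≤ (P * Q).trace := by
  obtain ⟨B, rfl⟩ := CStarAlgebra.nonneg_iff_eq_star_mul_self.mp hQ.nonneg
  rw [Matrix.star_eq_conjTranspose]
  have h : (B * P * Bᴴ).PosSemidef := hP.mul_mul_conjTranspose_same B
  have e : (P * (Bᴴ * B)).trace = (B * P * Bᴴ).trace := by
    rw [← mul_assoc, Matrix.trace_mul_comm, mul_assoc]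
  rw [e, Matrix.trace]
  exact Finset.sum_nonneg fun i _ => myPSDdiag h i

lemma myPSDsmul {M : Matrix V V ℝ} (hM : M.PosSemidef) {s : ℝ} (hs : 0 ≤ s) :
    (s • M).PosSemidef := by
  rw [Matrix.posSemidef_iff_dotProduct_mulVec]
  constructor
  · rw [Matrix.IsHermitian, Matrix.conjTranspose_smul, hM.1]
    simp
  · intro x
    rw [Matrix.smul_mulVec, dotProduct_smul, smul_eq_mul]
    exact mul_nonneg hs (hM.dotProduct_mulVec_nonneg x)

lemma mySumMulVec {ι : Type*} (s : Finset ι) (f : ι → Matrix V V ℝ) (x : V → ℝ) :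
    (∑ i ∈ s, f i) *ᵥ x = ∑ i ∈ s, f i *ᵥ x := by
  ext v
  simp only [Matrix.mulVec, dotProduct, Matrix.sum_apply, Finset.sum_apply,
    Finset.sum_mul]
  rw [Finset.sum_comm]

end Helpers

open Polynomial Matrix

set_option linter.unusedSectionVars false


/-- The vector chromatic number, as the optimal value of the SDP:
minimize `λ` subject to `M ⪰ 0`, `M_{vv} = λ - 1` for all `v`, and `M_{uv} ≤ -1`
on edges. -/
noncomputable def chiVecSDP {V : Type} [Fintype V] (G : SimpleGraph V) : ℝ :=
  sInf {lam : ℝ | ∃ M : Matrix V V ℝ, M.PosSemidef ∧ (∀ v, M v v = lam - 1) ∧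
    ∀ u v, G.Adj u v → M u v ≤ -1}

/-- The Lovász theta of the complement (strict vector chromatic number), as the
optimal value of the SDP: minimize `λ` subject to `M ⪰ 0`, `M_{vv} = λ - 1` for
all `v`, and `M_{uv} = -1` on edges. -/
noncomputable def thetaBarSDP {V : Type} [Fintype V] (G : SimpleGraph V) : ℝ :=
  sInf {lam : ℝ | ∃ M : Matrix V V ℝ, M.PosSemidef ∧ (∀ v, M v v = lam - 1) ∧
    ∀ u v, G.Adj u v → M u v = -1}

/-- If `G` is 1-homogeneous with degree `k` and least adjacency eigenvalue `τ`, then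
`χ_vec(G) = θ̄(G) = 1 - k/τ`. -/
theorem stmt14 {V : Type} [Fintype V] [DecidableEq V] [Nonempty V]
    (G : SimpleGraph V) [DecidableRel G.Adj] (k : ℕ) (τ : ℝ)
    (hhom : ∀ m : ℕ, ∃ b c : ℝ, (∀ v, (G.adjMatrix ℝ ^ m) v v = b) ∧
      ∀ u v, G.Adj u v → (G.adjMatrix ℝ ^ m) u v = c)
    (hdeg : ∀ v, G.degree v = k)
    (heig : ∃ x : V → ℝ, x ≠ 0 ∧ (G.adjMatrix ℝ).mulVec x = τ • x)
    (hleast : ∀ (μ : ℝ) (x : V → ℝ), x ≠ 0 →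
      (G.adjMatrix ℝ).mulVec x = μ • x → τ ≤ μ) :
    chiVecSDP G = 1 - (k : ℝ) / τ ∧ thetaBarSDP G = 1 - (k : ℝ) / τ := by
  classical
  by_cases hk : k = 0
  · -- empty graph case
    subst hk
    have hnoadj : ∀ u v, ¬ G.Adj u v := by
      intro u v huv
      have hpos := (G.degree_pos_iff_exists_adj u).mpr ⟨v, huv⟩
      rw [hdeg u] at hpos
      exact absurd hpos (lt_irrefl 0)
    rw [Nat.cast_zero, zero_div, sub_zero]
    have h1memχ : (1:ℝ) ∈ {lam : ℝ | ∃ M : Matrix V V ℝ, M.PosSemidef ∧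
        (∀ v, M v v = lam - 1) ∧ ∀ u v, G.Adj u v → M u v ≤ -1} :=
      ⟨0, Matrix.PosSemidef.zero, fun v => by simp, fun u v h => absurd h (hnoadj u v)⟩
    have h1memθ : (1:ℝ) ∈ {lam : ℝ | ∃ M : Matrix V V ℝ, M.PosSemidef ∧
        (∀ v, M v v = lam - 1) ∧ ∀ u v, G.Adj u v → M u v = -1} :=
      ⟨0, Matrix.PosSemidef.zero, fun v => by simp, fun u v h => absurd h (hnoadj u v)⟩
    have hlbχ : ∀ lam ∈ {lam : ℝ | ∃ M : Matrix V V ℝ, M.PosSemidef ∧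
        (∀ v, M v v = lam - 1) ∧ ∀ u v, G.Adj u v → M u v ≤ -1}, (1:ℝ) ≤ lam := by
      rintro lam ⟨M, hM, hd, -⟩
      have := myPSDdiag hM (Classical.arbitrary V)
      rw [hd] at this; linarith
    have hlbθ : ∀ lam ∈ {lam : ℝ | ∃ M : Matrix V V ℝ, M.PosSemidef ∧
        (∀ v, M v v = lam - 1) ∧ ∀ u v, G.Adj u v → M u v = -1}, (1:ℝ) ≤ lam := by
      rintro lam ⟨M, hM, hd, -⟩
      have := myPSDdiag hM (Classical.arbitrary V)
      rw [hd] at this; linarith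
    constructor
    · exact le_antisymm (csInf_le ⟨1, hlbχ⟩ h1memχ) (le_csInf ⟨1, h1memχ⟩ hlbχ)
    · exact le_antisymm (csInf_le ⟨1, hlbθ⟩ h1memθ) (le_csInf ⟨1, h1memθ⟩ hlbθ)
  · -- main case: k ≥ 1
    set A := G.adjMatrix ℝ with hAdef
    have hsymm : Aᵀ = A := G.isSymm_adjMatrix
    have hA : A.IsHermitian := by
      rw [Matrix.IsHermitian, Matrix.conjTranspose_eq_transpose_of_trivial]
      exact hsymm
    obtain ⟨x, hx0, hxeig⟩ := heig
    have heigge : ∀ i, τ ≤ hA.eigenvalues i := by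
      intro i
      refine hleast _ _ ?_ (hA.mulVec_eigenvectorBasis i)
      intro h
      exact hA.eigenvectorBasis.orthonormal.ne_zero i (by ext v; exact congrFun h v)
    have hshift : (A - τ • 1).PosSemidef := myShiftPSD hA τ heigge
    -- an edge exists
    obtain ⟨v₀⟩ := (inferInstance : Nonempty V)
    have hdv : 0 < G.degree v₀ := by rw [hdeg v₀]; exact Nat.pos_of_ne_zero hk
    obtain ⟨w₀, hw₀⟩ := (G.degree_pos_iff_exists_adj v₀).mp hdv
    have hne : v₀ ≠ w₀ := G.ne_of_adj hw₀
    -- τ < 0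
    have hτ : τ < 0 := by
      have hq := hshift.dotProduct_mulVec_nonneg (Pi.single v₀ (1:ℝ) - Pi.single w₀ 1)
      simp only [star_trivial, Matrix.sub_mulVec, Matrix.mulVec_sub, Matrix.mulVec_single,
        Matrix.smul_mulVec, Matrix.one_mulVec, dotProduct_sub,
        sub_dotProduct, single_dotProduct, one_mul, mul_one, Pi.sub_apply,
        Pi.smul_apply, Pi.single_apply, smul_eq_mul] at hq
      simp only [Matrix.sub_apply, Matrix.smul_apply, Matrix.one_apply, smul_eq_mul,
        SimpleGraph.adjMatrix_apply, hw₀, hw₀.symm, if_true, if_pos rfl,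
        SimpleGraph.irrefl, if_false, if_neg hne, if_neg hne.symm, hAdef] at hq
      norm_num [Matrix.one_apply_ne hne, Matrix.one_apply_ne hne.symm, hw₀, hw₀.symm] at hq
      linarith
    have hτne : τ ≠ 0 := hτ.ne
    -- the interpolation polynomial and projection E
    set S : Finset ℝ := (Finset.univ.image hA.eigenvalues).erase τ with hSdef
    set q : ℝ[X] := ∏ μ ∈ S, (Polynomial.C (τ - μ)⁻¹ * (Polynomial.X - Polynomial.C μ))
      with hqdef
    have hqτ : q.eval τ = 1 := by
      rw [hqdef, Polynomial.eval_prod]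
      apply Finset.prod_eq_one
      intro μ hμ
      have hμτ : τ - μ ≠ 0 := sub_ne_zero.mpr (Ne.symm (Finset.mem_erase.mp hμ).1)
      rw [Polynomial.eval_mul, Polynomial.eval_C, Polynomial.eval_sub, Polynomial.eval_X,
        Polynomial.eval_C]
      exact inv_mul_cancel₀ hμτ
    have hqeig : ∀ i, q.eval (hA.eigenvalues i) =
        if hA.eigenvalues i = τ then 1 else 0 := by
      intro i
      by_cases h : hA.eigenvalues i = τ
      · rw [if_pos h, h]; exact hqτ
      · rw [if_neg h, hqdef, Polynomial.eval_prod]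
        refine Finset.prod_eq_zero (Finset.mem_erase.mpr
          ⟨h, Finset.mem_image_of_mem _ (Finset.mem_univ i)⟩) ?_
        simp
    set E : Matrix V V ℝ := Polynomial.aeval A q with hEdef
    have hEE : E * E = E := by
      have h0 : Polynomial.aeval A (q * q - q) = 0 := by
        apply myAevalVanish hA
        intro i
        by_cases h : hA.eigenvalues i = τ <;>
          simp [Polynomial.eval_mul, Polynomial.eval_sub, hqeig i, h, hqτ]
      rw [_root_.map_sub, _root_.map_mul, sub_eq_zero] at h0
      exact h0
    have hAE : A * E = τ • E := by
      have h1 : Polynomial.aeval A ((Polynomial.X - Polynomial.C τ) * q) = 0 := by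
        apply myAevalVanish hA
        intro i
        by_cases h : hA.eigenvalues i = τ <;>
          simp [Polynomial.eval_mul, Polynomial.eval_sub, hqeig i, h]
      rw [_root_.map_mul, _root_.map_sub, Polynomial.aeval_X, Polynomial.aeval_C,
        Algebra.algebraMap_eq_smul_one, Matrix.sub_mul, sub_eq_zero,
        Matrix.smul_mul, one_mul] at h1
      exact h1
    have hpow : ∀ m : ℕ, A ^ m *ᵥ x = τ ^ m • x := by
      intro m
      induction m with
      | zero => simp
      | succ n ih =>
          rw [pow_succ, ← Matrix.mulVec_mulVec, hxeig, Matrix.mulVec_smul, ih,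
            smul_smul, pow_succ]
          rw [mul_comm]
    have hEx : E *ᵥ x = x := by
      rw [hEdef, Polynomial.aeval_eq_sum_range, mySumMulVec]
      have : ∀ i ∈ Finset.range (q.natDegree + 1),
          (q.coeff i • A ^ i) *ᵥ x = (q.coeff i * τ ^ i) • x := by
        intro i _
        rw [Matrix.smul_mulVec, hpow i, smul_smul]
      rw [Finset.sum_congr rfl this, ← Finset.sum_smul, ← Polynomial.eval_eq_sum_range, hqτ,
        one_smul]
    have hEne : E ≠ 0 := by
      intro h
      apply hx0
      rw [← hEx, h, Matrix.zero_mulVec]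
    have hEsymm : Eᵀ = E := by
      rw [hEdef, Polynomial.aeval_eq_sum_range, Matrix.transpose_sum]
      apply Finset.sum_congr rfl
      intro i _
      rw [Matrix.transpose_smul, Matrix.transpose_pow, hsymm]
    have hEpsd : E.PosSemidef := by
      have hEE' : E = Eᴴ * E := by rw [Matrix.conjTranspose_eq_transpose_of_trivial, hEsymm, hEE]
      rw [hEE']
      exact Matrix.posSemidef_conjTranspose_mul_self E
    -- constant diagonal and edge entries
    choose bf cf hbf hcf using hhom
    set b : ℝ := ∑ i ∈ Finset.range (q.natDegree + 1), q.coeff i * bf i with hbdef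
    set c : ℝ := ∑ i ∈ Finset.range (q.natDegree + 1), q.coeff i * cf i with hcdef
    have hEdiag : ∀ v, E v v = b := by
      intro v
      rw [hEdef, Polynomial.aeval_eq_sum_range, Matrix.sum_apply, hbdef]
      apply Finset.sum_congr rfl
      intro i _
      rw [Matrix.smul_apply, hbf i v, smul_eq_mul]
    have hEedge : ∀ u v, G.Adj u v → E u v = c := by
      intro u v huv
      rw [hEdef, Polynomial.aeval_eq_sum_range, Matrix.sum_apply, hcdef]
      apply Finset.sum_congr rfl
      intro i _
      rw [Matrix.smul_apply, hcf i u v huv, smul_eq_mul]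
    have hEswap : ∀ u w, E w u = E u w := by
      intro u w
      conv_lhs => rw [← hEsymm]
      rfl
    have hrowsq : ∀ v, E v v = ∑ w, (E v w) ^ 2 := by
      intro v
      conv_lhs => rw [← hEE]
      rw [Matrix.mul_apply]
      apply Finset.sum_congr rfl
      intro w _
      rw [hEswap v w]; ring
    have hbnn : 0 ≤ b := by
      rw [← hEdiag v₀, hrowsq v₀]
      exact Finset.sum_nonneg fun w _ => sq_nonneg _
    have hb0 : 0 < b := by
      rcases hbnn.lt_or_eq with h | h
      · exact h
      · exfalso
        apply hEne
        ext u w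
        have h1 : ∑ w, (E u w) ^ 2 = 0 := by rw [← hrowsq u, hEdiag u, ← h]
        have h2 := (Finset.sum_eq_zero_iff_of_nonneg
          (fun w _ => sq_nonneg (E u w))).mp h1 w (Finset.mem_univ w)
        simpa using pow_eq_zero_iff (n := 2) (by norm_num) |>.mp h2
    -- the key relation k * c = τ * b
    have hkc : (k : ℝ) * c = τ * b := by
      have h1 : (A * E) v₀ v₀ = τ * b := by
        rw [hAE, Matrix.smul_apply, hEdiag v₀, smul_eq_mul]
      have h2 : (A * E) v₀ v₀ = (k : ℝ) * c := by
        rw [Matrix.mul_apply]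
        have hterm : ∀ w, A v₀ w * E w v₀ = if G.Adj v₀ w then c else 0 := by
          intro w
          by_cases h : G.Adj v₀ w
          · rw [if_pos h, hEedge w v₀ h.symm]
            simp [hAdef, SimpleGraph.adjMatrix_apply, h]
          · rw [if_neg h]
            simp [hAdef, SimpleGraph.adjMatrix_apply, h]
        rw [Finset.sum_congr rfl fun w _ => hterm w, Finset.sum_ite, Finset.sum_const,
          Finset.sum_const_zero, add_zero, ← SimpleGraph.neighborFinset_eq_filter,
          SimpleGraph.card_neighborFinset_eq_degree, hdeg v₀, nsmul_eq_mul]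
      rw [← h2, h1]
    have hτb : τ * b < 0 := mul_neg_of_neg_of_pos hτ hb0
    have hkpos : (0 : ℝ) < (k : ℝ) := by exact_mod_cast Nat.pos_of_ne_zero hk
    set s : ℝ := -(k : ℝ) / (τ * b) with hsdef
    have hs : 0 ≤ s := div_nonneg_of_nonpos (a := -(k:ℝ)) (by linarith) hτb.le
    set M0 : Matrix V V ℝ := s • E with hM0def
    have hM0psd : M0.PosSemidef := myPSDsmul hEpsd hs
    have hM0diag : ∀ v, M0 v v = (1 - (k : ℝ) / τ) - 1 := by
      intro v
      rw [hM0def, Matrix.smul_apply, hEdiag v, smul_eq_mul, hsdef]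
      field_simp
      ring
    have hM0edge : ∀ u v, G.Adj u v → M0 u v = -1 := by
      intro u v huv
      rw [hM0def, Matrix.smul_apply, hEedge u v huv, smul_eq_mul, hsdef]
      rw [div_mul_eq_mul_div, div_eq_iff hτb.ne]
      linarith [hkc]
    -- membership
    have hmemχ : (1 - (k : ℝ) / τ) ∈ {lam : ℝ | ∃ M : Matrix V V ℝ, M.PosSemidef ∧
        (∀ v, M v v = lam - 1) ∧ ∀ u v, G.Adj u v → M u v ≤ -1} :=
      ⟨M0, hM0psd, hM0diag, fun u v h => (hM0edge u v h).le⟩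
    have hmemθ : (1 - (k : ℝ) / τ) ∈ {lam : ℝ | ∃ M : Matrix V V ℝ, M.PosSemidef ∧
        (∀ v, M v v = lam - 1) ∧ ∀ u v, G.Adj u v → M u v = -1} :=
      ⟨M0, hM0psd, hM0diag, hM0edge⟩
    -- lower bound
    have hcard : (0 : ℝ) < (Fintype.card V : ℝ) := by
      exact_mod_cast Fintype.card_pos
    have hlb : ∀ lam : ℝ, (∃ M : Matrix V V ℝ, M.PosSemidef ∧
        (∀ v, M v v = lam - 1) ∧ ∀ u v, G.Adj u v → M u v ≤ -1) →
        1 - (k : ℝ) / τ ≤ lam := by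
      rintro lam ⟨M, hMpsd, hMdiag, hMedge⟩
      have htr : 0 ≤ (M * (A - τ • 1)).trace := myTraceMulNonneg hMpsd hshift
      have h1 : (M * (A - τ • 1)).trace = (M * A).trace - τ * M.trace := by
        rw [Matrix.mul_sub, Matrix.trace_sub]
        congr 1
        rw [Matrix.mul_smul, mul_one, Matrix.trace_smul, smul_eq_mul]
      have h2 : M.trace = (Fintype.card V : ℝ) * (lam - 1) := by
        rw [Matrix.trace]
        simp only [Matrix.diag_apply, hMdiag, Finset.sum_const, Finset.card_univ,
          nsmul_eq_mul]
      have h3 : (M * A).trace ≤ -((Fintype.card V : ℝ) * (k : ℝ)) := by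
        rw [Matrix.trace]
        have hrow : ∀ v, (M * A).diag v ≤ -(k : ℝ) := by
          intro v
          rw [Matrix.diag_apply, Matrix.mul_apply]
          have hterm : ∀ w, M v w * A w v = if G.Adj v w then M v w else 0 := by
            intro w
            by_cases h : G.Adj v w
            · rw [if_pos h]
              simp [hAdef, SimpleGraph.adjMatrix_apply, h.symm]
            · rw [if_neg h]
              have : ¬ G.Adj w v := fun hc => h hc.symm
              simp [hAdef, SimpleGraph.adjMatrix_apply, this]
          rw [Finset.sum_congr rfl fun w _ => hterm w, Finset.sum_ite,
            Finset.sum_const_zero, add_zero]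
          calc ∑ w ∈ Finset.univ.filter (G.Adj v ·), M v w
              ≤ ∑ w ∈ Finset.univ.filter (G.Adj v ·), (-1 : ℝ) :=
                Finset.sum_le_sum fun w hw => hMedge v w (Finset.mem_filter.mp hw).2
            _ = -(k : ℝ) := by
                rw [Finset.sum_const, ← SimpleGraph.neighborFinset_eq_filter,
                  SimpleGraph.card_neighborFinset_eq_degree, hdeg v, nsmul_eq_mul]
                ring
        calc ∑ v, (M * A).diag v ≤ ∑ _v : V, -(k : ℝ) :=
              Finset.sum_le_sum fun v _ => hrow v
          _ = -((Fintype.card V : ℝ) * (k : ℝ)) := by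
              rw [Finset.sum_const, Finset.card_univ, nsmul_eq_mul]; ring
      rw [h1, h2] at htr
      have hA1 : (Fintype.card V : ℝ) * (τ * (lam - 1)) ≤
          (Fintype.card V : ℝ) * (-(k : ℝ)) := by nlinarith
      have key : τ * (lam - 1) ≤ -(k : ℝ) := le_of_mul_le_mul_left hA1 hcard
      have h4 : -(k : ℝ) / τ ≤ lam - 1 := by
        rw [div_le_iff_of_neg hτ]
        linarith
      have h5 : -(k : ℝ) / τ = -((k : ℝ) / τ) := neg_div τ (k : ℝ)
      linarith
    have hlbθ : ∀ lam ∈ {lam : ℝ | ∃ M : Matrix V V ℝ, M.PosSemidef ∧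
        (∀ v, M v v = lam - 1) ∧ ∀ u v, G.Adj u v → M u v = -1},
        1 - (k : ℝ) / τ ≤ lam := by
      rintro lam ⟨M, hMpsd, hMdiag, hMedge⟩
      exact hlb lam ⟨M, hMpsd, hMdiag, fun u v h => (hMedge u v h).le⟩
    constructor
    · exact le_antisymm (csInf_le ⟨1 - (k : ℝ) / τ, fun lam hlam => hlb lam hlam⟩ hmemχ)
        (le_csInf ⟨_, hmemχ⟩ fun lam hlam => hlb lam hlam)
    · exact le_antisymm (csInf_le ⟨1 - (k : ℝ) / τ, hlbθ⟩ hmemθ)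
        (le_csInf ⟨_, hmemθ⟩ hlbθ)
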